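/- Let X be an infinite-dimensional complex Banach space, T a bounded linear operator on X, and b > 1. Suppose x ∈ X is [1,b]𝕋-supercyclic for T and the closure of Orb(𝕋x,T) intersected with [1,b]𝕋x equals 𝕋x ∪ b𝕋x. Then for every vector y ∈ X that is [1,b]𝕋-supercyclic for T, there exists λ ∈ [1,b] such that the closure of Orb(𝕋x,T) intersected with {t·y : t ∈ ℝ, t > 0} equals {(b^n/λ)·y : n ∈ ℤ}. -/

import Mathlib

open Filter Topology

lemma annulus_transport_aux
    (X : Type*) [NormedAddCommGroup X] [NormedSpace ℂ X]
    (T : X →L[ℂ] X) (b : ℝ)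
    (C : Set X) (hCc : IsClosed C)
    (hCpow : ∀ n : ℕ, ∀ w ∈ C, (T ^ n) w ∈ C)
    (hCrot : ∀ z : ℂ, ‖z‖ = 1 → ∀ w ∈ C, z • w ∈ C)
    (u : X)
    (hu : Dense {w : X | ∃ t ∈ Set.Icc (1 : ℝ) b, ∃ z : ℂ, ‖z‖ = 1 ∧
      ∃ n : ℕ, w = ((t : ℂ) * z) • (T ^ n) u})
    (v : X) :
    ∃ τ ∈ Set.Icc (1:ℝ) b, ∀ μ : ℝ, 0 < μ → ((μ:ℝ):ℂ) • u ∈ C →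
      ((μ / τ : ℝ) : ℂ) • v ∈ C := by
  obtain ⟨w, hw, hwlim⟩ := mem_closure_iff_seq_limit.1 (hu v)
  choose t ht z hz n hn using hw
  obtain ⟨τ, hτ, φ, hφ, hconv⟩ := (isCompact_Icc).tendsto_subseq ht
  refine ⟨τ, hτ, ?_⟩
  intro μ hμ hμu
  have hτ0 : (0:ℝ) < τ := lt_of_lt_of_le one_pos hτ.1
  have hmem : ∀ k : ℕ, ((μ / t (φ k) : ℝ) : ℂ) • w (φ k) ∈ C := by
    intro k
    have h1 : (T ^ (n (φ k))) (((μ:ℝ):ℂ) • u) ∈ C := hCpow _ _ hμu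
    have h2 := hCrot (z (φ k)) (hz (φ k)) _ h1
    have htk : (1:ℝ) ≤ t (φ k) := (ht (φ k)).1
    have htk0 : (t (φ k) : ℝ) ≠ 0 := by linarith
    have : z (φ k) • (T ^ (n (φ k))) (((μ:ℝ):ℂ) • u)
        = ((μ / t (φ k) : ℝ) : ℂ) • w (φ k) := by
      rw [hn (φ k), map_smul, smul_smul, smul_smul]
      congr 1
      have htk0' : ((t (φ k)):ℂ) ≠ 0 := by exact_mod_cast htk0
      field_simp
      rw [Complex.ofReal_div, mul_assoc, div_mul_cancel₀ _ htk0']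
    rwa [this] at h2
  have hlim : Tendsto (fun k => ((μ / t (φ k) : ℝ) : ℂ) • w (φ k)) atTop
      (𝓝 (((μ / τ : ℝ) : ℂ) • v)) := by
    have h1 : Tendsto (fun k => (μ / t (φ k) : ℝ)) atTop (𝓝 (μ / τ)) :=
      tendsto_const_nhds.div hconv (ne_of_gt hτ0)
    have h2 : Tendsto (fun k => ((μ / t (φ k) : ℝ) : ℂ)) atTop (𝓝 ((μ / τ : ℝ) : ℂ)) :=
      (Complex.continuous_ofReal.tendsto _).comp h1
    exact h2.smul (hwlim.comp (hφ.tendsto_atTop))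
  exact hCc.mem_of_tendsto hlim (Filter.Eventually.of_forall hmem)

/-- **Proposition 3.11.** If `x` is `[1,b]𝕋`-supercyclic for `T` with
`closure(Orb(𝕋x,T)) ∩ [1,b]𝕋x = 𝕋x ∪ b𝕋x`, then for every `[1,b]𝕋`-supercyclic vector `y`
there exists `λ ∈ [1,b]` such that
`closure(Orb(𝕋x,T)) ∩ ℝ₊y = {(b^n/λ)·y : n ∈ ℤ}`. -/
theorem annulus_supercyclic_parameter
    (X : Type*) [NormedAddCommGroup X] [NormedSpace ℂ X] [CompleteSpace X]
    (hX : ¬FiniteDimensional ℂ X) (T : X →L[ℂ] X) (b : ℝ) (hb : 1 < b)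
    (x : X)
    (hx : Dense {y : X | ∃ t ∈ Set.Icc (1 : ℝ) b, ∃ z : ℂ, ‖z‖ = 1 ∧
      ∃ n : ℕ, y = ((t : ℂ) * z) • (T ^ n) x})
    (hexc : closure {y : X | ∃ z : ℂ, ‖z‖ = 1 ∧ ∃ n : ℕ, y = z • (T ^ n) x} ∩
        {y : X | ∃ t ∈ Set.Icc (1 : ℝ) b, ∃ z : ℂ, ‖z‖ = 1 ∧ y = ((t : ℂ) * z) • x} =
      {y : X | ∃ z : ℂ, ‖z‖ = 1 ∧ y = z • x} ∪
        {y : X | ∃ z : ℂ, ‖z‖ = 1 ∧ y = ((b : ℂ) * z) • x}) :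
    ∀ y : X,
      Dense {w : X | ∃ t ∈ Set.Icc (1 : ℝ) b, ∃ z : ℂ, ‖z‖ = 1 ∧
        ∃ n : ℕ, w = ((t : ℂ) * z) • (T ^ n) y} →
      ∃ l ∈ Set.Icc (1 : ℝ) b,
        closure {w : X | ∃ z : ℂ, ‖z‖ = 1 ∧ ∃ n : ℕ, w = z • (T ^ n) x} ∩
            {w : X | ∃ t : ℝ, 0 < t ∧ w = ((t : ℝ) : ℂ) • y} =
          {w : X | ∃ n : ℤ, w = ((b ^ n / l : ℝ) : ℂ) • y} := by
  intro y hy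
  classical
  have hb0 : (0:ℝ) < b := lt_trans one_pos hb
  set S : Set X := {w : X | ∃ z : ℂ, ‖z‖ = 1 ∧ ∃ n : ℕ, w = z • (T ^ n) x} with hS
  set C : Set X := closure S with hCdef
  have hCc : IsClosed C := isClosed_closure
  have hxS : x ∈ S := ⟨1, norm_one, 0, by simp⟩
  have hxC : x ∈ C := subset_closure hxS
  -- invariance under T
  have hCT : ∀ w ∈ C, T w ∈ C := by
    intro w hw
    refine map_mem_closure T.continuous hw ?_
    rintro _ ⟨z, hz, n, rfl⟩
    refine ⟨z, hz, n+1, ?_⟩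
    rw [map_smul]
    congr 1
    rw [pow_succ']
    rfl
  have hCpow : ∀ n : ℕ, ∀ w ∈ C, (T ^ n) w ∈ C := by
    intro n
    induction n with
    | zero => intro w hw; simpa using hw
    | succ n ih =>
      intro w hw
      rw [pow_succ, ContinuousLinearMap.mul_apply]
      exact ih _ (hCT _ hw)
  have hCrot : ∀ z : ℂ, ‖z‖ = 1 → ∀ w ∈ C, z • w ∈ C := by
    intro z hz w hw
    refine map_mem_closure (continuous_const_smul z) hw ?_
    rintro _ ⟨z', hz', n, rfl⟩
    refine ⟨z * z', by rw [norm_mul, hz, hz', one_mul], n, ?_⟩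
    rw [smul_smul]
  -- the multiplication lemma
  have hmul : ∀ μ : ℂ, μ • x ∈ C → ∀ v ∈ C, μ • v ∈ C := by
    intro μ hμ v hv
    have h := map_mem_closure (continuous_const_smul μ) hv (t := C) ?_
    · rwa [hCc.closure_eq] at h
    · rintro _ ⟨z, hz, n, rfl⟩
      have heq : μ • (z • (T ^ n) x) = z • ((T ^ n) (μ • x)) := by
        rw [map_smul, smul_smul, smul_smul, mul_comm]
      show μ • (z • (T ^ n) x) ∈ C
      rw [heq]
      exact hCrot z hz _ (hCpow n _ hμ)
  -- x ≠ 0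
  have hx0 : x ≠ 0 := by
    rintro rfl
    apply hX
    have hzero : ∀ w : X, w = 0 := by
      intro w
      have hsub : {y : X | ∃ t ∈ Set.Icc (1 : ℝ) b, ∃ z : ℂ, ‖z‖ = 1 ∧
          ∃ n : ℕ, y = ((t : ℂ) * z) • (T ^ n) (0:X)} ⊆ {(0:X)} := by
        rintro _ ⟨t, ht, z, hz, n, rfl⟩
        simp
      have := closure_mono hsub (hx w)
      rwa [closure_singleton, Set.mem_singleton_iff] at this
    have : Subsingleton X := ⟨fun a c => by rw [hzero a, hzero c]⟩
    infer_instance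
  -- b ∈ G
  have hbxC : ((b:ℝ):ℂ) • x ∈ C := by
    have hmem : ((b:ℝ):ℂ) • x ∈ ({y : X | ∃ z : ℂ, ‖z‖ = 1 ∧ y = z • x} ∪
        {y : X | ∃ z : ℂ, ‖z‖ = 1 ∧ y = ((b : ℂ) * z) • x}) :=
      Or.inr ⟨1, norm_one, by rw [mul_one]⟩
    rw [← hexc] at hmem
    exact hmem.1
  -- G ∩ [1,b] = {1, b}
  have hIcc : ∀ μ : ℝ, 1 ≤ μ → μ ≤ b → ((μ:ℝ):ℂ) • x ∈ C → μ = 1 ∨ μ = b := by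
    intro μ h1 h2 hμ
    have hmem : ((μ:ℝ):ℂ) • x ∈
        (closure {y : X | ∃ z : ℂ, ‖z‖ = 1 ∧ ∃ n : ℕ, y = z • (T ^ n) x} ∩
          {y : X | ∃ t ∈ Set.Icc (1 : ℝ) b, ∃ z : ℂ, ‖z‖ = 1 ∧ y = ((t : ℂ) * z) • x}) :=
      ⟨hμ, ⟨μ, ⟨h1, h2⟩, 1, norm_one, by rw [mul_one]⟩⟩
    rw [hexc] at hmem
    have hμ0 : (0:ℝ) < μ := lt_of_lt_of_le one_pos h1
    rcases hmem with ⟨z, hz, hzx⟩ | ⟨z, hz, hzx⟩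
    · left
      have hzz : ((μ:ℝ):ℂ) = z := by
        have : (((μ:ℝ):ℂ) - z) • x = 0 := by rw [sub_smul, ← hzx, sub_self]
        rcases smul_eq_zero.1 this with h | h
        · exact sub_eq_zero.1 h
        · exact absurd h hx0
      have : ‖((μ:ℝ):ℂ)‖ = 1 := by rw [hzz]; exact hz
      rw [Complex.norm_real, Real.norm_eq_abs, abs_of_pos hμ0] at this
      exact this
    · right
      have hzz : ((μ:ℝ):ℂ) = (b:ℂ) * z := by
        have : (((μ:ℝ):ℂ) - (b:ℂ) * z) • x = 0 := by rw [sub_smul, ← hzx, sub_self]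
        rcases smul_eq_zero.1 this with h | h
        · exact sub_eq_zero.1 h
        · exact absurd h hx0
      have hnn : ‖((μ:ℝ):ℂ)‖ = ‖(b:ℂ)‖ * ‖z‖ := by rw [hzz, norm_mul]
      rw [Complex.norm_real, Complex.norm_real, Real.norm_eq_abs, Real.norm_eq_abs,
        abs_of_pos hμ0, abs_of_pos hb0, hz, mul_one] at hnn
      exact hnn
  -- multiplicativity in real form
  have hGmul : ∀ μ ν : ℝ, ((μ:ℝ):ℂ) • x ∈ C → ((ν:ℝ):ℂ) • x ∈ C →
      ((μ * ν : ℝ):ℂ) • x ∈ C := by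
    intro μ ν hμ hν
    have := hmul _ hμ _ hν
    rwa [smul_smul, ← Complex.ofReal_mul] at this
  -- small elements of G are inverse powers of b
  have hGsmall : ∀ μ : ℝ, 0 < μ → μ ≤ 1 → ((μ:ℝ):ℂ) • x ∈ C → ∃ j : ℕ, μ * b ^ j = 1 := by
    intro μ hμ0 hμ1 hμC
    have hex : ∃ k : ℕ, 1 ≤ μ * b ^ k := by
      obtain ⟨k, hk⟩ := pow_unbounded_of_one_lt μ⁻¹ hb
      refine ⟨k, le_of_lt ?_⟩
      calc (1:ℝ) = μ * μ⁻¹ := (mul_inv_cancel₀ hμ0.ne').symm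
        _ < μ * b ^ k := by exact mul_lt_mul_of_pos_left hk hμ0
    set j := Nat.find hex with hjdef
    have hj1 : 1 ≤ μ * b ^ j := Nat.find_spec hex
    have hjC : ∀ i : ℕ, ((μ * b ^ i : ℝ):ℂ) • x ∈ C := by
      intro i
      induction i with
      | zero => simpa using hμC
      | succ i ih =>
        have := hGmul _ b ih hbxC
        rwa [mul_assoc, ← pow_succ] at this
    have hjb : μ * b ^ j < b := by
      rcases Nat.eq_zero_or_pos j with h0 | hpos
      · rw [h0]; simpa using lt_of_le_of_lt hμ1 hb
      · obtain ⟨i, hi⟩ := Nat.exists_eq_succ_of_ne_zero hpos.ne'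
        have hni : ¬ (1 ≤ μ * b ^ i) := by
          rw [hjdef] at hi
          exact Nat.find_min hex (by omega)
        push_neg at hni
        calc μ * b ^ j = (μ * b ^ i) * b := by rw [hi, pow_succ]; ring
          _ < 1 * b := by exact mul_lt_mul_of_pos_right hni hb0
          _ = b := one_mul b
    rcases hIcc (μ * b ^ j) hj1 (le_of_lt hjb) (hjC j) with h | h
    · exact ⟨j, h⟩
    · exact absurd h (ne_of_lt hjb)
  -- transport instances
  obtain ⟨lam, hlamI, hlam⟩ := annulus_transport_aux X T b C hCc hCpow hCrot x hx y
  obtain ⟨s, hsI, hs⟩ := annulus_transport_aux X T b C hCc hCpow hCrot y hy x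
  have hlam0 : (0:ℝ) < lam := lt_of_lt_of_le one_pos hlamI.1
  have hs0 : (0:ℝ) < s := lt_of_lt_of_le one_pos hsI.1
  have hxC1 : ((1:ℝ):ℂ) • x ∈ C := by simpa using hxC
  -- b⁻¹ ∈ G
  have hbinv : ((b⁻¹ : ℝ):ℂ) • x ∈ C := by
    set r : ℝ := (1 + b) / 2 with hrdef
    have hr1 : 1 < r := by rw [hrdef]; linarith
    have hrb : r < b := by rw [hrdef]; linarith
    have hr0 : (0:ℝ) < r := lt_trans one_pos hr1
    obtain ⟨τ, hτI, hτ⟩ := annulus_transport_aux X T b C hCc hCpow hCrot x hx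
      (((r⁻¹ : ℝ):ℂ) • x)
    have hτ0 : (0:ℝ) < τ := lt_of_lt_of_le one_pos hτI.1
    have h1 := hτ 1 one_pos hxC1
    rw [smul_smul] at h1
    have heq : ((1 / τ : ℝ):ℂ) * ((r⁻¹ : ℝ):ℂ) = (((τ * r)⁻¹ : ℝ):ℂ) := by
      push_cast
      rw [mul_inv]
      rw [one_div, mul_comm]
    rw [heq] at h1
    have hτr1 : 1 < τ * r := by nlinarith [hτI.1]
    have hτrb2 : τ * r < b ^ 2 := by nlinarith [hτI.2]
    obtain ⟨j, hj⟩ := hGsmall ((τ * r)⁻¹) (by positivity) (by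
      rw [inv_le_one_iff₀]; right; exact le_of_lt hτr1) h1
    have hbj : (b:ℝ) ^ j = τ * r := by
      have hτr0 : (0:ℝ) < τ * r := lt_trans one_pos hτr1
      field_simp at hj
      linarith
    have hjval : j = 1 := by
      rcases j with _ | _ | i
      · exfalso; rw [pow_zero] at hbj; linarith
      · rfl
      · exfalso
        have h2 : (1:ℝ) ≤ b ^ i := one_le_pow₀ (le_of_lt hb)
        have : (b:ℝ) ^ (i + 2) = b ^ i * b ^ 2 := by ring
        nlinarith [hbj, hτrb2]
    rw [hjval, pow_one] at hbj
    rw [← hbj] at h1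
    rwa [hbj, ← hbj] at h1
  -- powers of b
  have hbpow : ∀ k : ℕ, (((b:ℝ) ^ k : ℝ):ℂ) • x ∈ C := by
    intro k
    induction k with
    | zero => simpa using hxC
    | succ k ih =>
      have := hGmul _ b ih hbxC
      rwa [← pow_succ] at this
  have hbinvpow : ∀ k : ℕ, (((b⁻¹:ℝ) ^ k : ℝ):ℂ) • x ∈ C := by
    intro k
    induction k with
    | zero => simpa using hxC
    | succ k ih =>
      have := hGmul _ b⁻¹ ih hbinv
      rwa [← pow_succ] at this
  have hbz : ∀ m : ℤ, (((b:ℝ) ^ m : ℝ):ℂ) • x ∈ C := by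
    intro m
    rcases m with k | k
    · rw [Int.ofNat_eq_coe, zpow_natCast]
      exact hbpow k
    · rw [zpow_negSucc, ← inv_pow]
      exact hbinvpow (k + 1)
  -- G = b^ℤ
  have hGz : ∀ μ : ℝ, 0 < μ → ((μ:ℝ):ℂ) • x ∈ C → ∃ m : ℤ, μ = b ^ m := by
    intro μ hμ0 hμC
    obtain ⟨k, hk⟩ := pow_unbounded_of_one_lt μ hb
    have h1 : ((μ * (b⁻¹) ^ k : ℝ):ℂ) • x ∈ C := hGmul _ _ hμC (hbinvpow k)
    have hbk0 : (0:ℝ) < b ^ k := pow_pos hb0 k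
    have hle : μ * (b⁻¹) ^ k ≤ 1 := by
      rw [inv_pow]
      calc μ * (b ^ k)⁻¹ ≤ b ^ k * (b ^ k)⁻¹ :=
            mul_le_mul_of_nonneg_right (le_of_lt hk) (by positivity)
        _ = 1 := mul_inv_cancel₀ hbk0.ne'
    obtain ⟨j, hj⟩ := hGsmall _ (by positivity) hle h1
    refine ⟨(k:ℤ) - j, ?_⟩
    have hj' : μ * b ^ j = b ^ k := by
      rw [inv_pow] at hj
      field_simp at hj
      linarith
    rw [zpow_sub₀ (ne_of_gt hb0), zpow_natCast, zpow_natCast,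
      eq_div_iff (ne_of_gt (pow_pos hb0 j))]
    exact hj'
  -- backward inclusion data
  have hΛback : ∀ m : ℤ, (((b:ℝ) ^ m / lam : ℝ):ℂ) • y ∈ C := fun m =>
    hlam _ (zpow_pos hb0 m) (hbz m)
  -- forward
  have hΛfor : ∀ t : ℝ, 0 < t → ((t:ℝ):ℂ) • y ∈ C → ∃ n : ℤ, t = b ^ n / lam := by
    intro t ht0 htC
    obtain ⟨m, hm⟩ := hGz (t / s) (by positivity) (hs t ht0 htC)
    have h2 : ((1 / lam : ℝ):ℂ) • y ∈ C := hlam 1 one_pos hxC1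
    obtain ⟨m₀, hm₀⟩ := hGz ((1 / lam) / s) (by positivity) (hs _ (by positivity) h2)
    refine ⟨m - m₀, ?_⟩
    have hbm₀ : (0:ℝ) < (b:ℝ) ^ m₀ := zpow_pos hb0 m₀
    have hm' : t = b ^ m * s := by
      rw [div_eq_iff hs0.ne'] at hm
      exact hm
    have hm₀' : lam * ((b:ℝ) ^ m₀ * s) = 1 := by
      rw [div_div, div_eq_iff (by positivity : lam * s ≠ 0)] at hm₀
      nlinarith [hm₀]
    rw [eq_div_iff hlam0.ne', zpow_sub₀ (ne_of_gt hb0),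
      eq_comm, div_eq_iff (ne_of_gt hbm₀), hm']
    calc (b:ℝ) ^ m = b ^ m * 1 := (mul_one _).symm
      _ = b ^ m * (lam * ((b:ℝ) ^ m₀ * s)) := by rw [hm₀']
      _ = b ^ m * s * lam * b ^ m₀ := by ring
  -- conclusion
  refine ⟨lam, hlamI, ?_⟩
  ext w
  simp only [Set.mem_inter_iff, Set.mem_setOf_eq]
  constructor
  · rintro ⟨hwC, t, ht0, rfl⟩
    obtain ⟨n, hn⟩ := hΛfor t ht0 hwC
    exact ⟨n, by rw [hn]⟩
  · rintro ⟨n, rfl⟩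
    exact ⟨hΛback n, ⟨b ^ n / lam, div_pos (zpow_pos hb0 n) hlam0, rfl⟩⟩
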